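/- More generally, if D is a compact linear order and d₀ ∈ D is neither the least nor the greatest element of D, then L^{ω₁}_{(D,d₀)} = {x ∈ D^{ω₁} : the set of α with x(α) ≠ d₀ is countable}, ordered lexicographically, is countably saturated. -/

import Mathlib

open Ordinal

/-- Countable saturation of a linear order. -/
def CSat (L : Type*) [LinearOrder L] : Prop :=
  DenselyOrdered L ∧ NoMinOrder L ∧ NoMaxOrder L ∧
  (∀ x : ℕ → L, StrictMono x → ∀ s, ¬ IsLUB (Set.range x) s) ∧
  (∀ y : ℕ → L, StrictAnti y → ∀ s, ¬ IsGLB (Set.range y) s) ∧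
  (∀ x y : ℕ → L, StrictMono x → StrictAnti y → (∀ n, x n < y n) →
    ∃ z, ∀ n, x n < z ∧ z < y n)

/-- A compact line: every subset has a supremum and an infimum. -/
def CompactLine (K : Type*) [LinearOrder K] : Prop :=
  ∀ S : Set K, (∃ a, IsLUB S a) ∧ (∃ a, IsGLB S a)

set_option linter.unusedSectionVars false

namespace S7
universe u
variable {K : Type u} [LinearOrder K] [WellFoundedLT K] {D : Type} [LinearOrder D]

lemma lt_iff {x y : K → D} :
    toLex x < toLex y ↔ ∃ i, (∀ j, j < i → x j = y j) ∧ x i < y i := Iff.rfl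

lemma lt_of_agree {x y : K → D} (i : K) (ha : ∀ j, j < i → x j = y j) (hi : x i < y i) :
    toLex x < toLex y := lt_iff.2 ⟨i, ha, hi⟩

lemma ne_of_ltx {x y : K → D} (h : toLex x < toLex y) : x ≠ y := fun e => h.ne (by rw [e])

lemma apply_le_of_agree {x y : K → D} (h : toLex x ≤ toLex y) {i : K}
    (ha : ∀ j, j < i → x j = y j) : x i ≤ y i := by
  by_contra hc
  exact absurd (lt_of_agree i (fun j hj => (ha j hj).symm) (not_le.1 hc)) (not_lt.2 h)

lemma sandwich {x y z : K → D} (hxy : toLex x ≤ toLex y) (hyz : toLex y ≤ toLex z)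
    {i : K} (ha : ∀ j, j < i → x j = z j) : ∀ j, j < i → y j = x j := by
  by_contra hc
  push_neg at hc
  obtain ⟨j', hj'i, hj'⟩ := hc
  have hS : ∃ j, j ∈ {j | j < i ∧ x j ≠ y j} := ⟨j', hj'i, fun e => hj' e.symm⟩
  set j₀ := (IsWellFounded.wf (r := ((· < ·) : K → K → Prop))).min _ hS with hj₀def
  obtain ⟨hj₀i, hj₀ne⟩ : j₀ < i ∧ x j₀ ≠ y j₀ := WellFounded.min_mem _ _ hS
  have hagr : ∀ j, j < j₀ → x j = y j := by
    intro j hj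
    by_contra hcc
    exact WellFounded.not_lt_min _ {j | j < i ∧ x j ≠ y j} ⟨hj.trans hj₀i, hcc⟩ hj
  have hxy0 : x j₀ < y j₀ := (apply_le_of_agree hxy hagr).lt_of_ne hj₀ne
  have : toLex z < toLex y := by
    refine lt_of_agree j₀ (fun j hj => ?_) ?_
    · rw [← ha j (hj.trans hj₀i)]; exact hagr j hj
    · rwa [← ha j₀ hj₀i]
  exact absurd this (not_lt.2 hyz)

noncomputable def FD (x y : K → D) (h : x ≠ y) : K :=
  (IsWellFounded.wf (r := ((· < ·) : K → K → Prop))).min {j | x j ≠ y j} (Function.ne_iff.1 h)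

lemma FD_ne (x y : K → D) (h : x ≠ y) : x (FD x y h) ≠ y (FD x y h) :=
  WellFounded.min_mem _ {j | x j ≠ y j} (Function.ne_iff.1 h)

lemma FD_agree (x y : K → D) (h : x ≠ y) : ∀ j, j < FD x y h → x j = y j := by
  intro j hj
  by_contra hc
  exact WellFounded.not_lt_min _ {j | x j ≠ y j} hc hj

lemma FD_lt {x y : K → D} (hlt : toLex x < toLex y) (h : x ≠ y) :
    x (FD x y h) < y (FD x y h) := by
  obtain ⟨i, ha, hi⟩ := lt_iff.1 hlt
  rcases lt_trichotomy i (FD x y h) with hc | hc | hc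
  · exact absurd (FD_agree x y h i hc) hi.ne
  · rwa [← hc]
  · exact absurd (ha _ hc) (FD_ne x y h)

lemma le_FD {x y : K → D} (h : x ≠ y) {i : K} (ha : ∀ j, j < i → x j = y j) :
    i ≤ FD x y h := by
  by_contra hc
  exact FD_ne x y h (ha _ (not_le.1 hc))

variable (d₀ : D)

def modif (x : K → D) (η : K) (d : D) : K → D :=
  fun j => if j < η then x j else if j = η then d else d₀

variable {d₀ : D}

lemma modif_agree {x : K → D} {η : K} {d : D} : ∀ j, j < η → modif d₀ x η d j = x j :=
  fun _ hj => if_pos hj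

lemma modif_self {x : K → D} {η : K} {d : D} : modif d₀ x η d η = d := by
  simp [modif]

lemma lt_modif {x : K → D} {η : K} {d : D} (h : x η < d) :
    toLex x < toLex (modif d₀ x η d) :=
  lt_of_agree η (fun j hj => (modif_agree j hj).symm) (by rwa [modif_self])

lemma modif_lt {x : K → D} {η : K} {d : D} (h : d < x η) :
    toLex (modif d₀ x η d) < toLex x :=
  lt_of_agree η (fun j hj => modif_agree j hj) (by rwa [modif_self])

lemma modif_countable {x : K → D} (hx : {α | x α ≠ d₀}.Countable) (η : K) (d : D) :
    {α | modif d₀ x η d α ≠ d₀}.Countable := by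
  refine (hx.union (Set.countable_singleton η)).mono ?_
  intro j hj
  simp only [Set.mem_setOf_eq, modif] at hj
  split_ifs at hj with h1 h2
  · exact Or.inl hj
  · exact Or.inr h2
  · exact absurd rfl hj

variable (hK : ∀ C : Set K, C.Countable → ∃ η, ∀ c ∈ C, c < η)
include hK in
lemma exists_high {x : K → D} (hx : {α | x α ≠ d₀}.Countable)
    {C : Set K} (hC : C.Countable) : ∃ η, (∀ c ∈ C, c < η) ∧ x η = d₀ := by
  obtain ⟨η, hη⟩ := hK _ (hx.union hC)
  refine ⟨η, fun c hc => hη c (Or.inr hc), ?_⟩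
  by_contra h
  exact absurd (hη η (Or.inl h)) (lt_irrefl η)

noncomputable def dsup (hD : CompactLine D) (S : Set D) : D := ((hD S).1).choose

lemma dsup_spec (hD : CompactLine D) (S : Set D) : IsLUB S (dsup hD S) := ((hD S).1).choose_spec

noncomputable def dinf (hD : CompactLine D) (S : Set D) : D := ((hD S).2).choose

lemma dinf_spec (hD : CompactLine D) (S : Set D) : IsGLB S (dinf hD S) := ((hD S).2).choose_spec

lemma dsup_singleton_of {hD : CompactLine D} {S : Set D} {d : D} (h : S = {d}) :
    dsup hD S = d := by
  rw [h] at *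
  exact (dsup_spec hD _).unique isLUB_singleton

lemma dinf_singleton_of {hD : CompactLine D} {S : Set D} {d : D} (h : S = {d}) :
    dinf hD S = d := by
  rw [h] at *
  exact (dinf_spec hD _).unique isGLB_singleton





abbrev SP (K : Type u) (D : Type) [LinearOrder K] [WellFoundedLT K] [LinearOrder D] (d₀ : D) :=
  {x : Lex (K → D) // {α | ofLex x α ≠ d₀}.Countable}

variable {b a : D}

include hK in
lemma comp_dense (hb : d₀ < b) (x y : SP K D d₀) (h : x < y) :
    ∃ z : SP K D d₀, x < z ∧ z < y := by
  obtain ⟨i, hagr, hi⟩ := lt_iff.1 (Subtype.coe_lt_coe.2 h)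
  obtain ⟨η, hηC, hη⟩ := exists_high hK x.2 (Set.countable_singleton i)
  have hiη : i < η := hηC i rfl
  refine ⟨⟨toLex (modif d₀ (ofLex x.1) η b), modif_countable x.2 η b⟩, ?_, ?_⟩
  · exact Subtype.coe_lt_coe.1 (lt_modif (lt_of_eq_of_lt hη hb))
  · refine Subtype.coe_lt_coe.1 (lt_of_agree i (fun j hj => ?_) ?_)
    · rw [modif_agree j (hj.trans hiη)]; exact hagr j hj
    · rw [modif_agree i hiη]; exact hi

include hK in
lemma comp_nomax (hb : d₀ < b) (x : SP K D d₀) : ∃ z : SP K D d₀, x < z := by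
  obtain ⟨η, _, hη⟩ := exists_high hK x.2 Set.countable_empty
  exact ⟨⟨toLex (modif d₀ (ofLex x.1) η b), modif_countable x.2 η b⟩,
    Subtype.coe_lt_coe.1 (lt_modif (lt_of_eq_of_lt hη hb))⟩

include hK in
lemma comp_nomin (ha : a < d₀) (x : SP K D d₀) : ∃ z : SP K D d₀, z < x := by
  obtain ⟨η, _, hη⟩ := exists_high hK x.2 Set.countable_empty
  exact ⟨⟨toLex (modif d₀ (ofLex x.1) η a), modif_countable x.2 η a⟩,
    Subtype.coe_lt_coe.1 (modif_lt (ha.trans_eq hη.symm))⟩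

include hK in
lemma comp_nosup (ha : a < d₀) (x : ℕ → SP K D d₀) (hx : StrictMono x) (s : SP K D d₀)
    (hs : IsLUB (Set.range x) s) : False := by
  have hlt : ∀ n, x n < s := fun n =>
    lt_of_lt_of_le (hx (Nat.lt_succ_self n)) (hs.1 (Set.mem_range_self (n + 1)))
  choose β hβ1 hβ2 using fun n => lt_iff.1 (Subtype.coe_lt_coe.2 (hlt n))
  obtain ⟨η, hηgt, hη⟩ := exists_high hK s.2 (Set.countable_range β)
  have hβη : ∀ n, β n < η := fun n => hηgt (β n) (Set.mem_range_self n)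
  set z : SP K D d₀ := ⟨toLex (modif d₀ (ofLex s.1) η a), modif_countable s.2 η a⟩ with hzdef
  have hzs : z < s := Subtype.coe_lt_coe.1 (modif_lt (ha.trans_eq hη.symm))
  have hub : z ∈ upperBounds (Set.range x) := by
    rintro _ ⟨n, rfl⟩
    refine le_of_lt (Subtype.coe_lt_coe.1 (lt_of_agree (β n) (fun j hj => ?_) ?_))
    · rw [hβ1 n j hj]; exact (modif_agree j (hj.trans (hβη n))).symm
    · rw [modif_agree (β n) (hβη n)]; exact hβ2 n
  exact absurd (hs.2 hub) (not_le.2 hzs)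

include hK in
lemma comp_noinf (hb : d₀ < b) (y : ℕ → SP K D d₀) (hy : StrictAnti y) (s : SP K D d₀)
    (hs : IsGLB (Set.range y) s) : False := by
  have hlt : ∀ n, s < y n := fun n =>
    lt_of_le_of_lt (hs.1 (Set.mem_range_self (n + 1))) (hy (Nat.lt_succ_self n))
  choose β hβ1 hβ2 using fun n => lt_iff.1 (Subtype.coe_lt_coe.2 (hlt n))
  obtain ⟨η, hηgt, hη⟩ := exists_high hK s.2 (Set.countable_range β)
  have hβη : ∀ n, β n < η := fun n => hηgt (β n) (Set.mem_range_self n)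
  set z : SP K D d₀ := ⟨toLex (modif d₀ (ofLex s.1) η b), modif_countable s.2 η b⟩ with hzdef
  have hzs : s < z := Subtype.coe_lt_coe.1 (lt_modif (lt_of_eq_of_lt hη hb))
  have hlb : z ∈ lowerBounds (Set.range y) := by
    rintro _ ⟨n, rfl⟩
    refine le_of_lt (Subtype.coe_lt_coe.1 (lt_of_agree (β n) (fun j hj => ?_) ?_))
    · rw [← hβ1 n j hj]; exact modif_agree j (hj.trans (hβη n))
    · rw [modif_agree (β n) (hβη n)]; exact hβ2 n
  exact absurd (hs.2 hlb) (not_le.2 hzs)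



include hK in
lemma comp_gap (hD : CompactLine D) (ha : a < d₀) (hb : d₀ < b)
    (x y : ℕ → SP K D d₀) (hx : StrictMono x) (hy : StrictAnti y)
    (hxy : ∀ n, x n < y n) : ∃ z : SP K D d₀, ∀ n, x n < z ∧ z < y n := by
  classical
  set X : ℕ → K → D := fun n => ofLex (x n).1 with hXdef
  set Y : ℕ → K → D := fun n => ofLex (y n).1 with hYdef
  have hxy2 : ∀ n m, x n < y m := by
    intro n m
    rcases le_total n m with h | h
    · exact lt_of_le_of_lt (hx.monotone h) (hxy m)
    · exact lt_of_lt_of_le (hxy n) (hy.antitone h)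
  have hXle : ∀ n m, n ≤ m → toLex (X n) ≤ toLex (X m) := fun n m h =>
    Subtype.coe_le_coe.2 (hx.monotone h)
  have hYle : ∀ n m, n ≤ m → toLex (Y m) ≤ toLex (Y n) := fun n m h =>
    Subtype.coe_le_coe.2 (hy.antitone h)
  have hXYlt : ∀ n m, toLex (X n) < toLex (Y m) := fun n m =>
    Subtype.coe_lt_coe.2 (hxy2 n m)
  have hXYle : ∀ n m, toLex (X n) ≤ toLex (Y m) := fun n m => (hXYlt n m).le
  have hne : ∀ n, X n ≠ Y n := fun n => ne_of_ltx (hXYlt n n)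
  set Λ : ℕ → K := fun n => FD (X n) (Y n) (hne n) with hLdef
  have hΛlt : ∀ n, X n (Λ n) < Y n (Λ n) := fun n => FD_lt (hXYlt n n) (hne n)
  have hΛagr : ∀ n j, j < Λ n → X n j = Y n j := fun n => FD_agree _ _ (hne n)
  have agrX : ∀ k n, k ≤ n → ∀ j, j < Λ k → X n j = X k j := fun k n hkn =>
    sandwich (hXle k n hkn) (hXYle n k) (hΛagr k)
  have agrY : ∀ k m, k ≤ m → ∀ j, j < Λ k → Y m j = X k j := fun k m hkm =>
    sandwich (hXYle k m) (hYle k m hkm) (hΛagr k)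
  have hΛmono : ∀ k n, k ≤ n → Λ k ≤ Λ n := fun k n hkn =>
    le_FD (hne n) (fun j hj => (agrX k n hkn j hj).trans (agrY k n hkn j hj).symm)
  by_cases hstab : ∃ N, ∀ n, N ≤ n → Λ n = Λ N
  · -- CASE B : Λ eventually constant
    obtain ⟨N, hN⟩ := hstab
    set lam := Λ N with hlamdef
    have agrX' : ∀ n, N ≤ n → ∀ j, j < lam → X n j = X N j := agrX N
    have agrY' : ∀ m, N ≤ m → ∀ j, j < lam → Y m j = X N j := agrY N
    have agrXX : ∀ n m, N ≤ n → N ≤ m → ∀ j, j < lam → X n j = X m j :=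
      fun n m hn hm j hj => (agrX' n hn j hj).trans (agrX' m hm j hj).symm
    have pmono : ∀ n m, N ≤ n → n ≤ m → X n lam ≤ X m lam := fun n m hn hnm =>
      apply_le_of_agree (hXle n m hnm) (agrXX n m hn (hn.trans hnm))
    have qmono : ∀ n m, N ≤ n → n ≤ m → Y m lam ≤ Y n lam := fun n m hn hnm =>
      apply_le_of_agree (hYle n m hnm)
        (fun j hj => (agrY' m (hn.trans hnm) j hj).trans (agrY' n hn j hj).symm)
    have plt : ∀ n m, N ≤ n → N ≤ m → X n lam < Y m lam := by
      intro n m hn hm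
      have h1 : X (max n m) lam < Y (max n m) lam := by
        have h2 := hΛlt (max n m)
        rwa [hN (max n m) (le_trans hn (le_max_left n m))] at h2
      exact lt_of_le_of_lt (pmono n _ hn (le_max_left n m))
        (h1.trans_le (qmono m _ hm (le_max_right n m)))
    by_cases hp : ∃ n₀, N ≤ n₀ ∧ ∀ n, n₀ ≤ n → X n lam = X n₀ lam
    · -- B2 : value at lam eventually constant; bound tails from above
      obtain ⟨n₀, hn₀N, hcst⟩ := hp
      set v : K → D := fun j => dsup hD {d | ∃ n, n₀ ≤ n ∧ X n j = d} with hvdef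
      have hv : ∀ j, IsLUB {d | ∃ n, n₀ ≤ n ∧ X n j = d} (v j) := fun j => dsup_spec hD _
      have hvge : ∀ n, n₀ ≤ n → toLex (X n) ≤ toLex v := fun n hn =>
        Pi.toLex_monotone (fun j => (hv j).1 ⟨n, hn, rfl⟩)
      have hveq : ∀ j e, (∀ n, n₀ ≤ n → X n j = e) → v j = e := by
        intro j e hj
        refine dsup_singleton_of ?_
        ext d
        simp only [Set.mem_setOf_eq, Set.mem_singleton_iff]
        constructor
        · rintro ⟨n, hn, rfl⟩; exact hj n hn
        · rintro rfl; exact ⟨n₀, le_rfl, hj n₀ le_rfl⟩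
      have hvsupp : {j | v j ≠ d₀}.Countable := by
        refine (Set.countable_iUnion (fun n : ℕ => (x n).2)).mono ?_
        intro j hj
        simp only [Set.mem_setOf_eq] at hj
        by_contra hc
        simp only [Set.mem_iUnion, Set.mem_setOf_eq] at hc
        push_neg at hc
        exact hj (hveq j d₀ (fun n _ => hc n))
      obtain ⟨η, hηgt, hη⟩ := exists_high hK hvsupp (Set.countable_singleton lam)
      have hlamη : lam < η := hηgt lam rfl
      set z : SP K D d₀ := ⟨toLex (modif d₀ v η b), modif_countable hvsupp η b⟩ with hzdef
      have hvz : toLex v < toLex (modif d₀ v η b) := lt_modif (lt_of_eq_of_lt hη hb)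
      have hxz : ∀ n, x n < z := by
        have h1 : ∀ n, n₀ ≤ n → x n < z := fun n hn =>
          Subtype.coe_lt_coe.1 (lt_of_le_of_lt (hvge n hn) hvz)
        intro n
        exact lt_of_le_of_lt (hx.monotone (le_max_left n n₀)) (h1 _ (le_max_right n n₀))
      have hvloc : ∀ j, j < lam → v j = X N j := fun j hj =>
        hveq j (X N j) (fun n hn => agrX' n (hn₀N.trans hn) j hj)
      have hvlam : v lam = X n₀ lam := hveq lam _ hcst
      have hzy : ∀ m, z < y m := by
        have h2 : ∀ m, N ≤ m → z < y m := by
          intro m hm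
          refine Subtype.coe_lt_coe.1 (lt_of_agree lam (fun j hj => ?_) ?_)
          · rw [modif_agree j (hj.trans hlamη), hvloc j hj]
            exact (agrY' m hm j hj).symm
          · rw [modif_agree lam hlamη, hvlam]
            exact plt n₀ m hn₀N hm
        intro m
        exact lt_of_lt_of_le (h2 _ (le_max_right m N)) (hy.antitone (le_max_left m N))
      exact ⟨z, fun n => ⟨hxz n, hzy n⟩⟩
    · push_neg at hp
      set c := dsup hD {d | ∃ n, N ≤ n ∧ X n lam = d} with hcdef
      have hcub : IsLUB {d | ∃ n, N ≤ n ∧ X n lam = d} c := dsup_spec hD _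
      have hple : ∀ n, N ≤ n → X n lam ≤ c := fun n hn => hcub.1 ⟨n, hn, rfl⟩
      have hplt : ∀ n, N ≤ n → X n lam < c := by
        intro n hn
        refine (hple n hn).lt_of_ne ?_
        intro he
        obtain ⟨n', hn', hne'⟩ := hp n hn
        exact hne' (le_antisymm ((hple n' (hn.trans hn')).trans_eq he.symm) (pmono n n' hn hn'))
      have hcleq : ∀ m, N ≤ m → c ≤ Y m lam := by
        intro m hm
        refine hcub.2 ?_
        rintro d ⟨n, hn, rfl⟩
        exact (plt n m hn hm).le
      by_cases hq : ∀ m, N ≤ m → c < Y m lam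
      · -- B1 : plug c at lam
        set z : SP K D d₀ := ⟨toLex (modif d₀ (X N) lam c),
          modif_countable (x N).2 lam c⟩ with hzdef
        have hxz : ∀ n, x n < z := by
          have h1 : ∀ n, N ≤ n → x n < z := by
            intro n hn
            refine Subtype.coe_lt_coe.1 (lt_of_agree lam (fun j hj => ?_) ?_)
            · rw [modif_agree j hj]; exact agrX' n hn j hj
            · rw [modif_self]; exact hplt n hn
          intro n
          exact lt_of_le_of_lt (hx.monotone (le_max_left n N)) (h1 _ (le_max_right n N))
        have hzy : ∀ m, z < y m := by
          have h2 : ∀ m, N ≤ m → z < y m := by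
            intro m hm
            refine Subtype.coe_lt_coe.1 (lt_of_agree lam (fun j hj => ?_) ?_)
            · rw [modif_agree j hj]
              exact (agrY' m hm j hj).symm
            · rw [modif_self]; exact hq m hm
          intro m
          exact lt_of_lt_of_le (h2 _ (le_max_right m N)) (hy.antitone (le_max_left m N))
        exact ⟨z, fun n => ⟨hxz n, hzy n⟩⟩
      · -- B3 : value at lam eventually constant on the y side; bound tails from below
        push_neg at hq
        obtain ⟨m₀, hm₀N, hm₀⟩ := hq
        have hqc : ∀ m, m₀ ≤ m → Y m lam = c := fun m hm =>
          le_antisymm ((qmono m₀ m hm₀N hm).trans hm₀) (hcleq m (hm₀N.trans hm))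
        set v : K → D := fun j => dinf hD {d | ∃ m, m₀ ≤ m ∧ Y m j = d} with hvdef
        have hv : ∀ j, IsGLB {d | ∃ m, m₀ ≤ m ∧ Y m j = d} (v j) := fun j => dinf_spec hD _
        have hvle : ∀ m, m₀ ≤ m → toLex v ≤ toLex (Y m) := fun m hm =>
          Pi.toLex_monotone (fun j => (hv j).1 ⟨m, hm, rfl⟩)
        have hveq : ∀ j e, (∀ m, m₀ ≤ m → Y m j = e) → v j = e := by
          intro j e hj
          refine dinf_singleton_of ?_
          ext d
          simp only [Set.mem_setOf_eq, Set.mem_singleton_iff]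
          constructor
          · rintro ⟨m, hm, rfl⟩; exact hj m hm
          · rintro rfl; exact ⟨m₀, le_rfl, hj m₀ le_rfl⟩
        have hvsupp : {j | v j ≠ d₀}.Countable := by
          refine (Set.countable_iUnion (fun m : ℕ => (y m).2)).mono ?_
          intro j hj
          simp only [Set.mem_setOf_eq] at hj
          by_contra hc2
          simp only [Set.mem_iUnion, Set.mem_setOf_eq] at hc2
          push_neg at hc2
          exact hj (hveq j d₀ (fun m _ => hc2 m))
        obtain ⟨η, hηgt, hη⟩ := exists_high hK hvsupp (Set.countable_singleton lam)
        have hlamη : lam < η := hηgt lam rfl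
        set z : SP K D d₀ := ⟨toLex (modif d₀ v η a), modif_countable hvsupp η a⟩ with hzdef
        have hvz : toLex (modif d₀ v η a) < toLex v := modif_lt (ha.trans_eq hη.symm)
        have hzy : ∀ m, z < y m := by
          have h2 : ∀ m, m₀ ≤ m → z < y m := fun m hm =>
            Subtype.coe_lt_coe.1 (lt_of_lt_of_le hvz (hvle m hm))
          intro m
          exact lt_of_lt_of_le (h2 _ (le_max_right m m₀)) (hy.antitone (le_max_left m m₀))
        have hvloc : ∀ j, j < lam → v j = X N j := fun j hj =>
          hveq j (X N j) (fun m hm => agrY' m (hm₀N.trans hm) j hj)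
        have hvlam : v lam = c := hveq lam c hqc
        have hxz : ∀ n, x n < z := by
          have h1 : ∀ n, N ≤ n → x n < z := by
            intro n hn
            refine Subtype.coe_lt_coe.1 (lt_of_agree lam (fun j hj => ?_) ?_)
            · rw [modif_agree j (hj.trans hlamη), hvloc j hj]
              exact agrX' n hn j hj
            · rw [modif_agree lam hlamη, hvlam]
              exact hplt n hn
          intro n
          exact lt_of_le_of_lt (hx.monotone (le_max_left n N)) (h1 _ (le_max_right n N))
        exact ⟨z, fun n => ⟨hxz n, hzy n⟩⟩
  · -- CASE A : Λ strictly increasing cofinally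
    push_neg at hstab
    have hstrict : ∀ N, ∃ n, N ≤ n ∧ Λ N < Λ n := by
      intro N
      obtain ⟨n, hn, hne'⟩ := hstab N
      exact ⟨n, hn, (hΛmono N n hn).lt_of_ne (Ne.symm hne')⟩
    have hUne : ∃ η, η ∈ {η : K | ∀ n, Λ n ≤ η} := by
      obtain ⟨η, hη⟩ := hK (Set.range Λ) (Set.countable_range Λ)
      exact ⟨η, fun n => (hη (Λ n) (Set.mem_range_self n)).le⟩
    set lamS := (IsWellFounded.wf (r := ((· < ·) : K → K → Prop))).min _ hUne with hlamSdef
    have hlamS_ub : ∀ n, Λ n ≤ lamS := WellFounded.min_mem _ _ hUne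
    have hlamS_lt : ∀ n, Λ n < lamS := by
      intro n
      refine (hlamS_ub n).lt_of_ne ?_
      intro he
      obtain ⟨n', hn', hlt'⟩ := hstrict n
      exact absurd ((hlamS_ub n').trans_eq he.symm) (not_le.2 hlt')
    have hcof : ∀ β, β < lamS → ∃ n, β < Λ n := by
      intro β hβ
      by_contra hc
      push_neg at hc
      exact WellFounded.not_lt_min _ {η : K | ∀ n, Λ n ≤ η} hc hβ
    set w : K → D := fun β => if h : ∃ n, β < Λ n then X h.choose β else d₀ with hwdef
    have hwval : ∀ n β, β < Λ n → w β = X n β := by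
      intro n β hβ
      have hex : ∃ k, β < Λ k := ⟨n, hβ⟩
      have e0 : w β = X hex.choose β := by
        rw [hwdef]
        simp only [dif_pos hex]
      have h1 := hex.choose_spec
      have e1 : X (max hex.choose n) β = X hex.choose β :=
        agrX hex.choose (max hex.choose n) (le_max_left _ _) β h1
      have e2 : X (max hex.choose n) β = X n β :=
        agrX n (max hex.choose n) (le_max_right _ _) β hβ
      rw [e0, ← e1, e2]
    have hwsupp : {β | w β ≠ d₀}.Countable := by
      refine (Set.countable_iUnion (fun n : ℕ => (x n).2)).mono ?_
      intro β hβ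
      simp only [Set.mem_setOf_eq] at hβ
      rw [hwdef] at hβ
      simp only at hβ
      by_cases hex : ∃ n, β < Λ n
      · rw [dif_pos hex] at hβ
        exact Set.mem_iUnion.2 ⟨hex.choose, hβ⟩
      · rw [dif_neg hex] at hβ
        exact absurd rfl hβ
    have F2 : ∀ n, (¬ ∀ β, β < lamS → X n β = w β) →
        ∀ u : K → D, (∀ β, β < lamS → u β = w β) → toLex (X n) < toLex u := by
      intro n hn u hu
      have hS : ∃ j, j ∈ {β | β < lamS ∧ X n β ≠ w β} := by
        push_neg at hn
        obtain ⟨β, hβ1, hβ2⟩ := hn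
        exact ⟨β, hβ1, hβ2⟩
      obtain ⟨hj₀lam, hj₀ne⟩ : _ ∧ X n _ ≠ w _ := WellFounded.min_mem _ _ hS
      set j₀ := (IsWellFounded.wf (r := ((· < ·) : K → K → Prop))).min _ hS with hj₀def
      have hagr : ∀ j, j < j₀ → X n j = w j := by
        intro j hj
        by_contra hc
        exact WellFounded.not_lt_min _ {β | β < lamS ∧ X n β ≠ w β} ⟨hj.trans hj₀lam, hc⟩ hj
      obtain ⟨m, hm⟩ := hcof j₀ hj₀lam
      have hj₀m' : j₀ < Λ (max m n) := lt_of_lt_of_le hm (hΛmono m (max m n) (le_max_left m n))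
      have hXm' : ∀ j, j ≤ j₀ → X (max m n) j = w j := fun j hj =>
        (hwval (max m n) j (lt_of_le_of_lt hj hj₀m')).symm
      have hle : X n j₀ ≤ X (max m n) j₀ :=
        apply_le_of_agree (hXle n (max m n) (le_max_right m n))
          (fun j hj => (hagr j hj).trans (hXm' j hj.le).symm)
      have hlt2 : X n j₀ < w j₀ := by
        rw [← hXm' j₀ le_rfl] at hj₀ne ⊢
        exact hle.lt_of_ne hj₀ne
      refine lt_of_agree j₀ (fun j hj => ?_) ?_
      · rw [hagr j hj, hu j (hj.trans hj₀lam)]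
      · rw [hu j₀ hj₀lam]; exact hlt2
    have F2' : ∀ m, (¬ ∀ β, β < lamS → Y m β = w β) →
        ∀ u : K → D, (∀ β, β < lamS → u β = w β) → toLex u < toLex (Y m) := by
      intro m hm u hu
      have hS : ∃ j, j ∈ {β | β < lamS ∧ Y m β ≠ w β} := by
        push_neg at hm
        obtain ⟨β, hβ1, hβ2⟩ := hm
        exact ⟨β, hβ1, hβ2⟩
      obtain ⟨hj₀lam, hj₀ne⟩ : _ ∧ Y m _ ≠ w _ := WellFounded.min_mem _ _ hS
      set j₀ := (IsWellFounded.wf (r := ((· < ·) : K → K → Prop))).min _ hS with hj₀def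
      have hagr : ∀ j, j < j₀ → Y m j = w j := by
        intro j hj
        by_contra hc
        exact WellFounded.not_lt_min _ {β | β < lamS ∧ Y m β ≠ w β} ⟨hj.trans hj₀lam, hc⟩ hj
      obtain ⟨k, hk⟩ := hcof j₀ hj₀lam
      have hj₀k' : j₀ < Λ (max k m) := lt_of_lt_of_le hk (hΛmono k (max k m) (le_max_left k m))
      have hYk' : ∀ j, j ≤ j₀ → Y (max k m) j = w j := fun j hj =>
        ((hΛagr (max k m) j (lt_of_le_of_lt hj hj₀k')).symm).trans
          (hwval (max k m) j (lt_of_le_of_lt hj hj₀k')).symm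
      have hle : Y (max k m) j₀ ≤ Y m j₀ :=
        apply_le_of_agree (hYle m (max k m) (le_max_right k m))
          (fun j hj => (hYk' j hj.le).trans (hagr j hj).symm)
      have hne2 : Y (max k m) j₀ ≠ Y m j₀ := fun e => hj₀ne (e.symm.trans (hYk' j₀ le_rfl))
      have hlt2 : w j₀ < Y m j₀ := by
        rw [← hYk' j₀ le_rfl]
        exact hle.lt_of_ne hne2
      refine lt_of_agree j₀ (fun j hj => ?_) ?_
      · rw [hu j (hj.trans hj₀lam), hagr j hj]
      · rw [hu j₀ hj₀lam]; exact hlt2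
    have notAB : ∀ n m, (∀ β, β < lamS → X n β = w β) →
        (∀ β, β < lamS → Y m β = w β) → False := by
      intro n m hA hB
      have hFagr : ∀ j, j < FD (X n) (Y m) (ne_of_ltx (hXYlt n m)) → X n j = Y m j :=
        FD_agree _ _ _
      have hFne : X n (FD (X n) (Y m) (ne_of_ltx (hXYlt n m))) ≠
          Y m (FD (X n) (Y m) (ne_of_ltx (hXYlt n m))) := FD_ne _ _ _
      set F := FD (X n) (Y m) (ne_of_ltx (hXYlt n m)) with hFdef
      have hFle : F ≤ Λ (max n m) := by
        by_contra hc
        push_neg at hc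
        have h1 := sandwich (hXle n (max n m) (le_max_left n m)) (hXYle (max n m) m) hFagr
        have h2 := sandwich (hXYle n (max n m)) (hYle m (max n m) (le_max_right n m)) hFagr
        exact (hΛlt (max n m)).ne ((h1 (Λ (max n m)) hc).trans (h2 (Λ (max n m)) hc).symm)
      have hFlam : F < lamS := lt_of_le_of_lt hFle (hlamS_lt (max n m))
      exact hFne ((hA F hFlam).trans (hB F hFlam).symm)
    by_cases hB : ∃ m, ∀ β, β < lamS → Y m β = w β
    · -- some y agrees with the limit prefix: A side empty; bound B tails from below
      have hA : ∀ n, ¬ ∀ β, β < lamS → X n β = w β := by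
        obtain ⟨m, hm⟩ := hB
        exact fun n hn => notAB n m hn hm
      set v : K → D := fun j =>
        dinf hD ({w j} ∪ {d | ∃ m, (∀ β, β < lamS → Y m β = w β) ∧ Y m j = d}) with hvdef
      have hv : ∀ j, IsGLB ({w j} ∪ {d | ∃ m, (∀ β, β < lamS → Y m β = w β) ∧ Y m j = d}) (v j) :=
        fun j => dinf_spec hD _
      have hvle : ∀ m, (∀ β, β < lamS → Y m β = w β) → toLex v ≤ toLex (Y m) := fun m hm =>
        Pi.toLex_monotone (fun j => (hv j).1 (Or.inr ⟨m, hm, rfl⟩))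
      have hvloc : ∀ j, j < lamS → v j = w j := by
        intro j hj
        refine dinf_singleton_of ?_
        ext d
        simp only [Set.mem_union, Set.mem_setOf_eq, Set.mem_singleton_iff]
        constructor
        · rintro (rfl | ⟨m, hm, rfl⟩)
          · rfl
          · exact hm j hj
        · rintro rfl; exact Or.inl rfl
      have hvsupp : {j | v j ≠ d₀}.Countable := by
        refine (hwsupp.union (Set.countable_iUnion (fun m : ℕ => (y m).2))).mono ?_
        intro j hj
        simp only [Set.mem_setOf_eq] at hj
        by_contra hc2
        simp only [Set.mem_union, Set.mem_setOf_eq, Set.mem_iUnion] at hc2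
        push_neg at hc2
        apply hj
        refine dinf_singleton_of ?_
        ext d
        simp only [Set.mem_union, Set.mem_setOf_eq, Set.mem_singleton_iff]
        constructor
        · rintro (rfl | ⟨m, hm, rfl⟩)
          · exact hc2.1
          · exact hc2.2 m
        · rintro rfl; exact Or.inl hc2.1.symm
      obtain ⟨η, hηgt, hη⟩ := exists_high hK hvsupp (Set.countable_singleton lamS)
      have hlamSη : lamS < η := hηgt lamS rfl
      set z : SP K D d₀ := ⟨toLex (modif d₀ v η a), modif_countable hvsupp η a⟩ with hzdef
      have hmodw : ∀ β, β < lamS → modif d₀ v η a β = w β := fun β hβ =>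
        (modif_agree β (hβ.trans hlamSη)).trans (hvloc β hβ)
      have hvz : toLex (modif d₀ v η a) < toLex v := modif_lt (ha.trans_eq hη.symm)
      have hxz : ∀ n, x n < z := fun n => Subtype.coe_lt_coe.1 (F2 n (hA n) _ hmodw)
      have hzy : ∀ m, z < y m := by
        intro m
        by_cases hm : ∀ β, β < lamS → Y m β = w β
        · exact Subtype.coe_lt_coe.1 (lt_of_lt_of_le hvz (hvle m hm))
        · exact Subtype.coe_lt_coe.1 (F2' m hm _ hmodw)
      exact ⟨z, fun n => ⟨hxz n, hzy n⟩⟩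
    · -- no y agrees with the limit prefix: bound A tails from above
      have hBm : ∀ m, ¬ ∀ β, β < lamS → Y m β = w β := fun m hm => hB ⟨m, hm⟩
      set v : K → D := fun j =>
        dsup hD ({w j} ∪ {d | ∃ n, (∀ β, β < lamS → X n β = w β) ∧ X n j = d}) with hvdef
      have hv : ∀ j, IsLUB ({w j} ∪ {d | ∃ n, (∀ β, β < lamS → X n β = w β) ∧ X n j = d}) (v j) :=
        fun j => dsup_spec hD _
      have hvge : ∀ n, (∀ β, β < lamS → X n β = w β) → toLex (X n) ≤ toLex v := fun n hn =>
        Pi.toLex_monotone (fun j => (hv j).1 (Or.inr ⟨n, hn, rfl⟩))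
      have hvloc : ∀ j, j < lamS → v j = w j := by
        intro j hj
        refine dsup_singleton_of ?_
        ext d
        simp only [Set.mem_union, Set.mem_setOf_eq, Set.mem_singleton_iff]
        constructor
        · rintro (rfl | ⟨n, hn, rfl⟩)
          · rfl
          · exact hn j hj
        · rintro rfl; exact Or.inl rfl
      have hvsupp : {j | v j ≠ d₀}.Countable := by
        refine (hwsupp.union (Set.countable_iUnion (fun n : ℕ => (x n).2))).mono ?_
        intro j hj
        simp only [Set.mem_setOf_eq] at hj
        by_contra hc2
        simp only [Set.mem_union, Set.mem_setOf_eq, Set.mem_iUnion] at hc2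
        push_neg at hc2
        apply hj
        refine dsup_singleton_of ?_
        ext d
        simp only [Set.mem_union, Set.mem_setOf_eq, Set.mem_singleton_iff]
        constructor
        · rintro (rfl | ⟨n, hn, rfl⟩)
          · exact hc2.1
          · exact hc2.2 n
        · rintro rfl; exact Or.inl hc2.1.symm
      obtain ⟨η, hηgt, hη⟩ := exists_high hK hvsupp (Set.countable_singleton lamS)
      have hlamSη : lamS < η := hηgt lamS rfl
      set z : SP K D d₀ := ⟨toLex (modif d₀ v η b), modif_countable hvsupp η b⟩ with hzdef
      have hmodw : ∀ β, β < lamS → modif d₀ v η b β = w β := fun β hβ =>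
        (modif_agree β (hβ.trans hlamSη)).trans (hvloc β hβ)
      have hvz : toLex v < toLex (modif d₀ v η b) := lt_modif (lt_of_eq_of_lt hη hb)
      have hzy : ∀ m, z < y m := fun m => Subtype.coe_lt_coe.1 (F2' m (hBm m) _ hmodw)
      have hxz : ∀ n, x n < z := by
        intro n
        by_cases hn : ∀ β, β < lamS → X n β = w β
        · exact Subtype.coe_lt_coe.1 (lt_of_le_of_lt (hvge n hn) hvz)
        · exact Subtype.coe_lt_coe.1 (F2 n hn _ hmodw)
      exact ⟨z, fun n => ⟨hxz n, hzy n⟩⟩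


lemma aux_bound (C : Set ((ω_ 1 : Ordinal.{u}).ToType)) (hC : C.Countable) :
    ∃ η, ∀ c ∈ C, c < η := by
  by_contra h
  push_neg at h
  haveI : IsWellOrder ((ω_ 1 : Ordinal.{u}).ToType) (· < ·) := isWellOrder_lt
  have hu : Set.Unbounded ((· < ·) : (ω_ 1 : Ordinal.{u}).ToType → _ → Prop) C := by
    intro a
    obtain ⟨c, hc, hc2⟩ := h a
    exact ⟨c, hc, not_lt.2 hc2⟩
  have h2 := Order.cof_le (s := C) h
  rw [Ordinal.cof_toType] at h2
  have h3 : (ω_ 1 : Ordinal.{u}).cof = Cardinal.aleph 1 :=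
    Cardinal.isRegular_aleph_one.cof_omega_eq
  rw [h3] at h2
  exact absurd h2 (not_le.2 (hC.le_aleph0.trans_lt Cardinal.aleph0_lt_aleph_one))

end S7

theorem stmt7 (D : Type) [LinearOrder D] (hD : CompactLine D) (d₀ : D)
    (hmin : ∃ a, a < d₀) (hmax : ∃ b, d₀ < b) :
    CSat {x : Lex ((ω_ 1).ToType → D) // {α | ofLex x α ≠ d₀}.Countable} := by
  obtain ⟨a, ha⟩ := hmin
  obtain ⟨b, hb⟩ := hmax
  have hK := S7.aux_bound
  exact ⟨⟨fun p q h => S7.comp_dense hK hb p q h⟩,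
    ⟨fun p => S7.comp_nomin hK ha p⟩,
    ⟨fun p => S7.comp_nomax hK hb p⟩,
    fun xs hxs s hs => S7.comp_nosup hK ha xs hxs s hs,
    fun ys hys s hs => S7.comp_noinf hK hb ys hys s hs,
    fun xs ys hxs hys hxy => S7.comp_gap hK hD ha hb xs ys hxs hys hxy⟩
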